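/- Suppose Δ ⊆ ℝ^m is nonempty and bounded, f is lower semicontinuous on X × cl(Δ), Assumptions 2–4 hold, and there exists L_g ≥ 0 such that |g_d(ω) − g_d(ω')| ≤ L_g · max_{1≤i≤d} ‖δ_i − δ'_i‖ for all ω, ω' ∈ cl(Δ)^d. Then for every N ≥ d, every confidence level ε̂ ∈ (0,1) and every r > 0 with φ(r) ≥ 1 − ((1−ε̂)/d)^{1/N}, the quantity L_g · r is a uniform level-set bound: ℙ^N{ ω ∈ Δ^N : J* − L_g · r ≤ g_N(ω) } ≥ ε̂. -/

import Mathlib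

open MeasureTheory Set

/-- Scenario optimal value `g_N(ω) = inf { c·x : x ∈ X, f(x, δ_i) ≤ 0, i = 1,…,N }`. -/
noncomputable def scenVal {d m N : ℕ} (X : Set (EuclideanSpace ℝ (Fin d)))
    (c : EuclideanSpace ℝ (Fin d))
    (f : EuclideanSpace ℝ (Fin d) → EuclideanSpace ℝ (Fin m) → ℝ)
    (ω : Fin N → EuclideanSpace ℝ (Fin m)) : ℝ :=
  sInf ((fun x => ∑ i, c i * x i) '' {x ∈ X | ∀ i, f x (ω i) ≤ 0})

/-- Robust optimal value `J* = inf { c·x : x ∈ X, f(x,δ) ≤ 0 for all δ ∈ Δ }`. -/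
noncomputable def robustVal {d m : ℕ} (X : Set (EuclideanSpace ℝ (Fin d)))
    (c : EuclideanSpace ℝ (Fin d))
    (f : EuclideanSpace ℝ (Fin d) → EuclideanSpace ℝ (Fin m) → ℝ)
    (Δ : Set (EuclideanSpace ℝ (Fin m))) : ℝ :=
  sInf ((fun x => ∑ i, c i * x i) '' {x ∈ X | ∀ δ ∈ Δ, f x δ ≤ 0})

open scoped ENNReal NNReal

lemma lsc_section {α β : Type*} [TopologicalSpace α] [TopologicalSpace β]
    {f : α → β → ℝ} {s : Set α} {t : Set β}
    (h : LowerSemicontinuousOn (Function.uncurry f) (s ×ˢ t)) {δ : β} (hδ : δ ∈ t) :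
    LowerSemicontinuousOn (fun x => f x δ) s := by
  intro x hx y hy
  have htend : Filter.Tendsto (fun z => (z, δ)) (nhdsWithin x s) (nhdsWithin (x, δ) (s ×ˢ t)) :=
    ((continuous_id.prodMk continuous_const).continuousWithinAt).tendsto_nhdsWithin
      (fun z hz => ⟨hz, hδ⟩)
  exact htend.eventually (h (x, δ) ⟨hx, hδ⟩ y hy)

lemma closed_sep_of_lsc {α : Type*} [TopologicalSpace α] {s : Set α} (hs : IsClosed s)
    {g : α → ℝ} (hg : LowerSemicontinuousOn g s) : IsClosed {x ∈ s | g x ≤ 0} := by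
  rw [← isOpen_compl_iff, isOpen_iff_mem_nhds]
  intro x hx
  by_cases hxs : x ∈ s
  · have hgx : 0 < g x := by
      by_contra h
      exact hx ⟨hxs, le_of_not_gt h⟩
    have := hg x hxs 0 hgx
    rw [eventually_nhdsWithin_iff] at this
    exact this.mono fun z hz hmem => absurd hz (fun h => not_lt.mpr hmem.2 (h hmem.1))
  · exact Filter.mem_of_superset (hs.isOpen_compl.mem_nhds hxs) fun z hz hmem => hz hmem.1

/-- Helly step: for every `η > 0` there exist `d` scenarios in `Δ` whose scenario value
is at least `J* - η`. -/
lemma helly_step {d m : ℕ} (X : Set (EuclideanSpace ℝ (Fin d)))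
    (c : EuclideanSpace ℝ (Fin d))
    (Δ : Set (EuclideanSpace ℝ (Fin m))) (hΔne : Δ.Nonempty)
    (f : EuclideanSpace ℝ (Fin d) → EuclideanSpace ℝ (Fin m) → ℝ)
    (hlsc : LowerSemicontinuousOn (Function.uncurry f) (X ×ˢ closure Δ))
    (hfeas : ∃ x ∈ X, ∀ δ ∈ Δ, f x δ ≤ 0)
    (hXcomp : IsCompact X) (hXconv : Convex ℝ X)
    (hconv : ∀ δ ∈ Δ, ConvexOn ℝ X fun x => f x δ)
    (η : ℝ) (hη : 0 < η) :
    ∃ ω : Fin d → EuclideanSpace ℝ (Fin m), (∀ k, ω k ∈ Δ) ∧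
      robustVal X c f Δ - η ≤ scenVal X c f ω := by
  classical
  obtain ⟨xb, hxbX, hxbf⟩ := hfeas
  obtain ⟨δb, hδb⟩ := hΔne
  set obj : EuclideanSpace ℝ (Fin d) → ℝ := fun x => ∑ i, c i * x i with hobj_def
  have hobj : Continuous obj :=
    continuous_finset_sum _ fun i _ => continuous_const.mul ((continuous_apply i).comp (PiLp.continuous_ofLp 2 _))
  have hlin : IsLinearMap ℝ obj := by
    constructor <;> intros <;>
      simp [hobj_def, Finset.mul_sum, mul_add, Finset.sum_add_distrib, mul_left_comm]
  set J := robustVal X c f Δ with hJ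
  set G : Set (EuclideanSpace ℝ (Fin d)) := {x ∈ X | obj x ≤ J - η} with hG
  set F : Option {δ // δ ∈ Δ} → Set (EuclideanSpace ℝ (Fin d)) :=
    fun i => Option.elim i G (fun δ => {x ∈ X | f x δ.1 ≤ 0}) with hF
  have hbdd : BddBelow (obj '' {x ∈ X | ∀ δ ∈ Δ, f x δ ≤ 0}) :=
    (hXcomp.image hobj).bddBelow.mono (image_mono (sep_subset _ _))
  have hFconv : ∀ i, Convex ℝ (F i) := by
    rintro (_ | δ)
    · exact hXconv.inter (convex_halfSpace_le hlin _)
    · exact (hconv δ.1 δ.2).convex_le 0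
  have hFcomp : ∀ i, IsCompact (F i) := by
    rintro (_ | δ)
    · exact hXcomp.inter_right (isClosed_Iic.preimage hobj)
    · exact IsCompact.of_isClosed_subset hXcomp
        (closed_sep_of_lsc hXcomp.isClosed (lsc_section hlsc (subset_closure δ.2)))
        (sep_subset _ _)
  have hempty : ¬ (⋂ i, F i).Nonempty := by
    rintro ⟨x, hx⟩
    simp only [mem_iInter] at hx
    have hxG : x ∈ G := hx none
    have hxfeas : x ∈ {x ∈ X | ∀ δ ∈ Δ, f x δ ≤ 0} :=
      ⟨hxG.1, fun δ hδ => (hx (some ⟨δ, hδ⟩)).2⟩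
    have : J ≤ obj x := csInf_le hbdd (mem_image_of_mem _ hxfeas)
    linarith [hxG.2]
  have hIex : ∃ I : Finset (Option {δ // δ ∈ Δ}),
      I.card ≤ Module.finrank ℝ (EuclideanSpace ℝ (Fin d)) + 1 ∧
        ¬ (⋂ i ∈ I, F i).Nonempty := by
    by_contra h
    push_neg at h
    exact hempty (Convex.helly_theorem_compact' hFconv hFcomp fun I hI => h I hI)
  obtain ⟨I, hIcard, hIempty⟩ := hIex
  rw [finrank_euclideanSpace_fin] at hIcard
  have hnone : none ∈ I := by
    by_contra hn
    apply hIempty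
    refine ⟨xb, ?_⟩
    simp only [mem_iInter]
    intro i hi
    match i with
    | none => exact absurd hi hn
    | some δ => exact ⟨hxbX, hxbf δ.1 δ.2⟩
  set L := (I.erase none).toList with hL
  have hLlen : L.length ≤ d := by
    rw [hL, Finset.length_toList, Finset.card_erase_of_mem hnone]
    omega
  set ω : Fin d → EuclideanSpace ℝ (Fin m) :=
    fun k => ((L.getD k (some ⟨δb, hδb⟩)).getD ⟨δb, hδb⟩).1 with hω
  refine ⟨ω, fun k => ((L.getD k (some ⟨δb, hδb⟩)).getD ⟨δb, hδb⟩).2, ?_⟩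
  have hcover : ∀ δ : {δ // δ ∈ Δ}, some δ ∈ I → ∃ k : Fin d, ω k = δ.1 := by
    intro δ hδ
    have hmem : some δ ∈ L := by
      rw [hL, Finset.mem_toList, Finset.mem_erase]
      exact ⟨by simp, hδ⟩
    obtain ⟨n, hn, hget⟩ := List.mem_iff_getElem.mp hmem
    refine ⟨⟨n, lt_of_lt_of_le hn hLlen⟩, ?_⟩
    simp only [hω]
    rw [List.getD_eq_getElem _ _ hn, hget]; rfl
  have hxbS : xb ∈ {x ∈ X | ∀ k, f x (ω k) ≤ 0} :=
    ⟨hxbX, fun k => hxbf _ (((L.getD k (some ⟨δb, hδb⟩)).getD ⟨δb, hδb⟩).2)⟩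
  apply le_csInf (⟨obj xb, mem_image_of_mem _ hxbS⟩)
  rintro b ⟨x, hx, rfl⟩
  by_contra hlt
  push_neg at hlt
  apply hIempty
  refine ⟨x, ?_⟩
  simp only [mem_iInter]
  intro i hi
  match i with
  | none => exact ⟨hx.1, le_of_lt hlt⟩
  | some δ =>
    obtain ⟨k, hk⟩ := hcover δ hi
    exact ⟨hx.1, hk ▸ hx.2 k⟩

/-- Monotonicity: adding scenarios increases the scenario value. -/
lemma scenVal_mono {d m N : ℕ} (X : Set (EuclideanSpace ℝ (Fin d)))
    (c : EuclideanSpace ℝ (Fin d))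
    (f : EuclideanSpace ℝ (Fin d) → EuclideanSpace ℝ (Fin m) → ℝ)
    (hXcomp : IsCompact X)
    {xb : EuclideanSpace ℝ (Fin d)} (hxbX : xb ∈ X)
    (ω : Fin N → EuclideanSpace ℝ (Fin m)) (hωfeas : ∀ j, f xb (ω j) ≤ 0)
    (ω' : Fin d → EuclideanSpace ℝ (Fin m))
    (hsub : ∀ k, ∃ j, ω' k = ω j) :
    scenVal X c f ω' ≤ scenVal X c f ω := by
  set obj : EuclideanSpace ℝ (Fin d) → ℝ := fun x => ∑ i, c i * x i with hobj_def
  have hobj : Continuous obj :=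
    continuous_finset_sum _ fun i _ => continuous_const.mul ((continuous_apply i).comp (PiLp.continuous_ofLp 2 _))
  apply csInf_le_csInf
  · exact (hXcomp.image hobj).bddBelow.mono (image_mono (sep_subset _ _))
  · exact ⟨obj xb, mem_image_of_mem _ ⟨hxbX, hωfeas⟩⟩
  · apply image_mono
    rintro x ⟨hxX, hx⟩
    refine ⟨hxX, fun k => ?_⟩
    obtain ⟨j, hj⟩ := hsub k
    rw [hj]
    exact hx j

/-- Corollary (explicit uniform level-set bound): under the hypotheses of Theorem 9,
for every N ≥ d, confidence ε̂ ∈ (0,1) and r > 0 with φ(r) ≥ 1 − ((1−ε̂)/d)^{1/N},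
the quantity L_g·r is a ULB: ℙ^N { ω ∈ Δ^N : J* − L_g·r ≤ g_N(ω) } ≥ ε̂. -/
theorem stmt_12 {d m : ℕ} (hd : 1 ≤ d)
    (X : Set (EuclideanSpace ℝ (Fin d))) (c : EuclideanSpace ℝ (Fin d))
    (Δ : Set (EuclideanSpace ℝ (Fin m))) (hΔne : Δ.Nonempty)
    (hΔbdd : Bornology.IsBounded Δ)
    (f : EuclideanSpace ℝ (Fin d) → EuclideanSpace ℝ (Fin m) → ℝ)
    (hlsc : LowerSemicontinuousOn (Function.uncurry f) (X ×ˢ closure Δ))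
    -- Assumption 2
    (hfeas : ∃ x ∈ X, ∀ δ ∈ Δ, f x δ ≤ 0)
    -- Assumption 3 (X compact convex, f(·,δ) convex)
    (hXcomp : IsCompact X) (hXconv : Convex ℝ X)
    (hconv : ∀ δ ∈ Δ, ConvexOn ℝ X fun x => f x δ)
    -- probability measure supported on Δ
    (ℙ : Measure (EuclideanSpace ℝ (Fin m))) [IsProbabilityMeasure ℙ]
    (hΔmeas : MeasurableSet Δ) (hΔone : ℙ Δ = 1)
    -- Assumption 4 (regularity)
    (φ : ℝ → ℝ) (hφmono : StrictMonoOn φ (Set.Ici 0))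
    (hφrange : ∀ r ∈ Set.Ici (0 : ℝ), φ r ∈ Set.Icc (0 : ℝ) 1)
    (hφreg : ∀ δ ∈ closure Δ, ∀ r : ℝ, 0 < r →
      ENNReal.ofReal (φ r) ≤ ℙ (Metric.ball δ r ∩ Δ))
    -- Lipschitz condition on g_d
    (Lg : ℝ) (hLg : 0 ≤ Lg)
    (hLip : ∀ ω ω' : Fin d → EuclideanSpace ℝ (Fin m),
      (∀ i, ω i ∈ closure Δ) → (∀ i, ω' i ∈ closure Δ) →
      |scenVal X c f ω - scenVal X c f ω'| ≤
        Lg * Finset.univ.sup' (Finset.univ_nonempty_iff.mpr ⟨⟨0, hd⟩⟩)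
          (fun i => ‖ω i - ω' i‖))
    (N : ℕ) (hN : d ≤ N)
    (εhat : ℝ) (hεhat : εhat ∈ Set.Ioo (0 : ℝ) 1)
    (r : ℝ) (hr : 0 < r)
    (hφr : 1 - ((1 - εhat) / (d : ℝ)) ^ ((N : ℝ)⁻¹) ≤ φ r) :
    ENNReal.ofReal εhat ≤
      (Measure.pi fun _ : Fin N => ℙ)
        {ω : Fin N → EuclideanSpace ℝ (Fin m) |
          (∀ i, ω i ∈ Δ) ∧ robustVal X c f Δ - Lg * r ≤ scenVal X c f ω} := by
  classical
  obtain ⟨δb, hδb⟩ := hΔne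
  obtain ⟨xb, hxbX, hxbf⟩ := hfeas
  set K : Set (Fin d → EuclideanSpace ℝ (Fin m)) := Set.pi univ (fun _ => closure Δ) with hK
  have hclcomp : IsCompact (closure Δ) := hΔbdd.isCompact_closure
  have hKcomp : IsCompact K := isCompact_univ_pi fun _ => hclcomp
  have hKne : K.Nonempty := ⟨fun _ => δb, fun i _ => subset_closure hδb⟩
  have hLg2 : (Lg.toNNReal : ℝ) = Lg := Real.coe_toNNReal _ hLg
  have hlipOn : LipschitzOnWith (Real.toNNReal Lg)
      (scenVal X c f : (Fin d → EuclideanSpace ℝ (Fin m)) → ℝ) K := by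
    apply LipschitzOnWith.of_dist_le_mul
    intro ω hω ω' hω'
    rw [Real.dist_eq, hLg2]
    refine (hLip ω ω' (fun i => hω i (mem_univ i)) (fun i => hω' i (mem_univ i))).trans ?_
    refine mul_le_mul_of_nonneg_left ?_ hLg
    refine Finset.sup'_le _ _ fun i _ => ?_
    rw [← dist_eq_norm]
    exact dist_le_pi_dist ω ω' i
  obtain ⟨ωs, hωsK, hmax⟩ := hKcomp.exists_isMaxOn hKne hlipOn.continuousOn
  have hωscl : ∀ k, ωs k ∈ closure Δ := fun k => hωsK k (mem_univ k)
  have hrv : robustVal X c f Δ ≤ scenVal X c f ωs := by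
    apply le_of_forall_pos_le_add
    intro η hη
    obtain ⟨ωe, hωeΔ, hωe⟩ :=
      helly_step X c Δ ⟨δb, hδb⟩ f hlsc ⟨xb, hxbX, hxbf⟩ hXcomp hXconv hconv η hη
    have hωeK : ωe ∈ K := fun i _ => subset_closure (hωeΔ i)
    have hle := hmax hωeK
    simp only [mem_setOf_eq] at hle
    linarith
  -- measure-theoretic part
  set μ := Measure.pi fun _ : Fin N => ℙ with hμ
  set B : Fin d → Set (EuclideanSpace ℝ (Fin m)) := fun k => Metric.ball (ωs k) r with hB
  set Bad : Fin d → Set (Fin N → EuclideanSpace ℝ (Fin m)) :=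
    fun k => Set.pi univ (fun _ => Δ \ B k) with hBad
  set D : Set (Fin N → EuclideanSpace ℝ (Fin m)) := Set.pi univ (fun _ => Δ) with hD
  have hφr0 : 0 ≤ φ r := (hφrange r hr.le).1
  have hφr1 : φ r ≤ 1 := (hφrange r hr.le).2
  have hDμ : μ D = 1 := by
    rw [hμ, hD, Measure.pi_pi]
    simp [hΔone]
  have hBadμ : ∀ k, μ (Bad k) ≤ ENNReal.ofReal ((1 - φ r) ^ N) := by
    intro k
    have h1 : ℙ (Δ \ B k) ≤ ENNReal.ofReal (1 - φ r) := by
      have hsub : Δ \ B k = Δ \ (B k ∩ Δ) := by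
        ext x; simp only [mem_diff, mem_inter_iff]; tauto
      rw [hsub,
        measure_diff inter_subset_right
          ((Metric.isOpen_ball.measurableSet.inter hΔmeas).nullMeasurableSet)
          (measure_ne_top _ _),
        hΔone]
      calc 1 - ℙ (B k ∩ Δ) ≤ 1 - ENNReal.ofReal (φ r) :=
            tsub_le_tsub_left (hφreg (ωs k) (hωscl k) r hr) 1
        _ = ENNReal.ofReal (1 - φ r) := by
            rw [ENNReal.ofReal_sub _ hφr0, ENNReal.ofReal_one]
    rw [hμ, hBad, Measure.pi_pi]
    calc ∏ _j : Fin N, ℙ (Δ \ B k) = ℙ (Δ \ B k) ^ N := by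
          rw [Finset.prod_const, Finset.card_univ, Fintype.card_fin]
      _ ≤ (ENNReal.ofReal (1 - φ r)) ^ N := pow_le_pow_left' h1 N
      _ = ENNReal.ofReal ((1 - φ r) ^ N) := (ENNReal.ofReal_pow (by linarith) N).symm
  have hq0 : (0:ℝ) ≤ (d : ℝ) * (1 - φ r) ^ N :=
    mul_nonneg (Nat.cast_nonneg d) (pow_nonneg (by linarith) N)
  have hUnion : μ (⋃ k, Bad k) ≤ ENNReal.ofReal ((d : ℝ) * (1 - φ r) ^ N) := by
    calc μ (⋃ k, Bad k) ≤ ∑ k : Fin d, μ (Bad k) := measure_iUnion_fintype_le _ _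
      _ ≤ ∑ _k : Fin d, ENNReal.ofReal ((1 - φ r) ^ N) :=
          Finset.sum_le_sum fun k _ => hBadμ k
      _ = (d : ℝ≥0∞) * ENNReal.ofReal ((1 - φ r) ^ N) := by
          rw [Finset.sum_const, Finset.card_univ, Fintype.card_fin, nsmul_eq_mul]
      _ = ENNReal.ofReal ((d : ℝ) * (1 - φ r) ^ N) := by
          rw [ENNReal.ofReal_mul (Nat.cast_nonneg d), ENNReal.ofReal_natCast]
  have hdpos : (0:ℝ) < d := by exact_mod_cast Nat.lt_of_lt_of_le Nat.zero_lt_one hd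
  have hNne : N ≠ 0 := by omega
  have hbase : (0:ℝ) ≤ (1 - εhat) / d := div_nonneg (by linarith [hεhat.2]) hdpos.le
  have hkey : (d : ℝ) * (1 - φ r) ^ N ≤ 1 - εhat := by
    have h1 : 1 - φ r ≤ ((1 - εhat) / d) ^ ((N : ℝ)⁻¹) := by linarith
    have h2 : (1 - φ r) ^ N ≤ (((1 - εhat) / d) ^ ((N : ℝ)⁻¹)) ^ N :=
      pow_le_pow_left₀ (by linarith) h1 N
    rw [Real.rpow_inv_natCast_pow hbase hNne] at h2
    calc (d : ℝ) * (1 - φ r) ^ N ≤ (d : ℝ) * ((1 - εhat) / d) :=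
          mul_le_mul_of_nonneg_left h2 hdpos.le
      _ = 1 - εhat := by field_simp
  -- the good event
  have hTS : D \ (⋃ k, Bad k) ⊆
      {ω : Fin N → EuclideanSpace ℝ (Fin m) |
        (∀ i, ω i ∈ Δ) ∧ robustVal X c f Δ - Lg * r ≤ scenVal X c f ω} := by
    rintro ω ⟨hωD, hωBad⟩
    have hωΔ : ∀ i, ω i ∈ Δ := fun i => hωD i (mem_univ i)
    have hch : ∀ k : Fin d, ∃ j : Fin N, ω j ∈ B k := by
      intro k
      have hnb : ω ∉ Bad k := fun h => hωBad (mem_iUnion.mpr ⟨k, h⟩)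
      rw [hBad] at hnb
      simp only [mem_pi, mem_univ, forall_true_left, mem_diff, not_forall] at hnb
      obtain ⟨j, hj⟩ := hnb
      refine ⟨j, ?_⟩
      by_contra hnball
      exact hj ⟨hωΔ j, hnball⟩
    choose jj hjj using hch
    refine ⟨hωΔ, ?_⟩
    set ω' : Fin d → EuclideanSpace ℝ (Fin m) := fun k => ω (jj k) with hω'
    have hmono : scenVal X c f ω' ≤ scenVal X c f ω :=
      scenVal_mono X c f hXcomp hxbX ω (fun j => hxbf _ (hωΔ j)) ω' (fun k => ⟨jj k, rfl⟩)
    have hlipest := hLip ω' ωs (fun k => subset_closure (hωΔ (jj k))) hωscl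
    have hsup : Finset.univ.sup' (Finset.univ_nonempty_iff.mpr ⟨⟨0, hd⟩⟩)
        (fun k => ‖ω' k - ωs k‖) ≤ r := by
      refine Finset.sup'_le _ _ fun k _ => ?_
      have hk := hjj k
      rw [hB, Metric.mem_ball] at hk
      rw [← dist_eq_norm]
      exact hk.le
    have hmul : Lg * Finset.univ.sup' (Finset.univ_nonempty_iff.mpr ⟨⟨0, hd⟩⟩)
        (fun k => ‖ω' k - ωs k‖) ≤ Lg * r := mul_le_mul_of_nonneg_left hsup hLg
    have habs := (abs_le.mp hlipest).1
    show robustVal X c f Δ - Lg * r ≤ scenVal X c f ω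
    linarith
  refine le_trans ?_ (measure_mono hTS)
  have h1le : (1 : ℝ≥0∞) ≤ μ (D \ (⋃ k, Bad k)) + ENNReal.ofReal ((d : ℝ) * (1 - φ r) ^ N) := by
    calc (1 : ℝ≥0∞) = μ D := hDμ.symm
      _ ≤ μ ((D \ (⋃ k, Bad k)) ∪ ⋃ k, Bad k) := measure_mono (subset_diff_union _ _)
      _ ≤ μ (D \ (⋃ k, Bad k)) + μ (⋃ k, Bad k) := measure_union_le _ _
      _ ≤ μ (D \ (⋃ k, Bad k)) + ENNReal.ofReal ((d : ℝ) * (1 - φ r) ^ N) :=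
          add_le_add le_rfl hUnion
  have hfinal : ENNReal.ofReal εhat + ENNReal.ofReal ((d : ℝ) * (1 - φ r) ^ N) ≤
      μ (D \ (⋃ k, Bad k)) + ENNReal.ofReal ((d : ℝ) * (1 - φ r) ^ N) := by
    refine le_trans ?_ h1le
    rw [← ENNReal.ofReal_add hεhat.1.le hq0, ← ENNReal.ofReal_one]
    exact ENNReal.ofReal_le_ofReal (by linarith)
  exact (ENNReal.add_le_add_iff_right ENNReal.ofReal_ne_top).mp hfinal
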